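/- Let K ⊆ ℝ^d be a compact set. If the normed space (C¹(K), ‖·‖_{C¹(K)}) is complete, then for every x ∈ K there exists C_x > 0 such that for all f ∈ C¹(K) and all y ∈ K with y ≠ x one has |f(y) − f(x)|/|y − x| ≤ C_x ‖f‖_{C¹(K)}. -/

import Mathlib

open Set Filter Topology MeasureTheory
open scoped NNReal ENNReal

noncomputable section

/-- `df` is a (not necessarily unique) derivative of `f` on the set `K`:
at every `x ∈ K`, `(f y - f x - ⟪df x, y - x⟫)/‖y - x‖ → 0` as `y → x` within `K`. -/
def IsDerivOn {d : ℕ} (K : Set (EuclideanSpace ℝ (Fin d)))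
    (f : EuclideanSpace ℝ (Fin d) → ℝ)
    (df : EuclideanSpace ℝ (Fin d) → EuclideanSpace ℝ (Fin d)) : Prop :=
  ∀ x ∈ K, Filter.Tendsto
    (fun y => (f y - f x - (inner ℝ (df x) (y - x) : ℝ)) / ‖y - x‖)
    (𝓝[K \ {x}] x) (𝓝 0)

/-- Sup norm of a function on `K`. -/
def supNormOn {d : ℕ} {α : Type*} [Norm α] (K : Set (EuclideanSpace ℝ (Fin d)))
    (g : EuclideanSpace ℝ (Fin d) → α) : ℝ :=
  sSup ((fun z => ‖g z‖) '' K)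

/-- `f ∈ C¹(K)`: `f` admits a continuous derivative on `K`. -/
def MemC1 {d : ℕ} (K : Set (EuclideanSpace ℝ (Fin d)))
    (f : EuclideanSpace ℝ (Fin d) → ℝ) : Prop :=
  ∃ df, ContinuousOn df K ∧ IsDerivOn K f df

/-- The quotient norm `‖f‖_{C¹(K)} = ‖f‖_K + inf {‖df‖_K : df a continuous derivative of f}`. -/
def c1Norm {d : ℕ} (K : Set (EuclideanSpace ℝ (Fin d)))
    (f : EuclideanSpace ℝ (Fin d) → ℝ) : ℝ :=
  supNormOn K f +
    sInf {r | ∃ df, ContinuousOn df K ∧ IsDerivOn K f df ∧ r = supNormOn K df}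

/-- A sequence of functions that is Cauchy with respect to the `C¹(K)` norm. -/
def C1Cauchy {d : ℕ} (K : Set (EuclideanSpace ℝ (Fin d)))
    (f : ℕ → EuclideanSpace ℝ (Fin d) → ℝ) : Prop :=
  ∀ ε > (0:ℝ), ∃ N : ℕ, ∀ m ≥ N, ∀ n ≥ N, c1Norm K (f m - f n) < ε

/-- Completeness of `(C¹(K), ‖·‖_{C¹(K)})`: every Cauchy sequence of `C¹(K)` functions
converges in the `C¹(K)` norm to a `C¹(K)` function. -/
def C1Complete {d : ℕ} (K : Set (EuclideanSpace ℝ (Fin d))) : Prop :=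
  ∀ f : ℕ → EuclideanSpace ℝ (Fin d) → ℝ, (∀ n, MemC1 K (f n)) → C1Cauchy K f →
    ∃ g, MemC1 K g ∧ Filter.Tendsto (fun n => c1Norm K (f n - g)) Filter.atTop (𝓝 0)

section Aux

variable {d : ℕ} {K : Set (EuclideanSpace ℝ (Fin d))}
  {f g : EuclideanSpace ℝ (Fin d) → ℝ}
  {df dg : EuclideanSpace ℝ (Fin d) → EuclideanSpace ℝ (Fin d)}

lemma supNormOn_nonneg {α : Type*} [NormedAddCommGroup α] (g : EuclideanSpace ℝ (Fin d) → α) :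
    0 ≤ supNormOn K g := by
  apply Real.sSup_nonneg
  rintro r ⟨z, _, rfl⟩
  exact norm_nonneg _

lemma supNormOn_le {α : Type*} [NormedAddCommGroup α] {g : EuclideanSpace ℝ (Fin d) → α} {M : ℝ}
    (hM : 0 ≤ M) (h : ∀ z ∈ K, ‖g z‖ ≤ M) : supNormOn K g ≤ M := by
  apply Real.sSup_le _ hM
  rintro r ⟨z, hz, rfl⟩
  exact h z hz

lemma norm_le_supNormOn {α : Type*} [NormedAddCommGroup α]
    {g : EuclideanSpace ℝ (Fin d) → α}
    (hK : IsCompact K) (hg : ContinuousOn g K) {z} (hz : z ∈ K) :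
    ‖g z‖ ≤ supNormOn K g := by
  apply le_csSup
  · exact (hK.image_of_continuousOn hg.norm).bddAbove
  · exact ⟨z, hz, rfl⟩

lemma isDerivOn_zero : IsDerivOn K (0 : EuclideanSpace ℝ (Fin d) → ℝ) 0 := by
  intro x hx
  have : (fun y : EuclideanSpace ℝ (Fin d) =>
      ((0 : EuclideanSpace ℝ (Fin d) → ℝ) y - (0 : EuclideanSpace ℝ (Fin d) → ℝ) x
        - (inner ℝ ((0 : EuclideanSpace ℝ (Fin d) → EuclideanSpace ℝ (Fin d)) x) (y - x) : ℝ)) / ‖y - x‖)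
      = fun _ => (0:ℝ) := by
    funext y; simp
  rw [this]; exact tendsto_const_nhds

lemma IsDerivOn.add (hf : IsDerivOn K f df) (hg : IsDerivOn K g dg) :
    IsDerivOn K (f + g) (df + dg) := by
  intro x hx
  have h := (hf x hx).add (hg x hx)
  rw [add_zero] at h
  refine h.congr fun y => ?_
  simp only [Pi.add_apply, inner_add_left]
  ring

lemma IsDerivOn.neg (hf : IsDerivOn K f df) : IsDerivOn K (-f) (-df) := by
  intro x hx
  have h := (hf x hx).neg
  rw [neg_zero] at h
  refine h.congr fun y => ?_
  simp only [Pi.neg_apply, inner_neg_left]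
  ring

lemma IsDerivOn.const_mul (c : ℝ) (hf : IsDerivOn K f df) :
    IsDerivOn K (fun z => c * f z) (fun z => c • df z) := by
  intro x hx
  have h := (hf x hx).const_mul c
  rw [mul_zero] at h
  refine h.congr fun y => ?_
  simp only [real_inner_smul_left]
  ring

lemma MemC1.zero : MemC1 K (0 : EuclideanSpace ℝ (Fin d) → ℝ) :=
  ⟨0, continuousOn_const, isDerivOn_zero⟩

lemma MemC1.add (hf : MemC1 K f) (hg : MemC1 K g) : MemC1 K (f + g) := by
  obtain ⟨df, h1, h2⟩ := hf
  obtain ⟨dg, h3, h4⟩ := hg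
  exact ⟨df + dg, h1.add h3, h2.add h4⟩

lemma MemC1.neg (hf : MemC1 K f) : MemC1 K (-f) := by
  obtain ⟨df, h1, h2⟩ := hf
  exact ⟨-df, h1.neg, h2.neg⟩

lemma MemC1.sub (hf : MemC1 K f) (hg : MemC1 K g) : MemC1 K (f - g) := by
  rw [sub_eq_add_neg]; exact hf.add hg.neg

lemma MemC1.const_mul (c : ℝ) (hf : MemC1 K f) : MemC1 K (fun z => c * f z) := by
  obtain ⟨df, h1, h2⟩ := hf
  exact ⟨fun z => c • df z, h1.const_smul c, h2.const_mul c⟩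

lemma MemC1.sum {ι : Type*} {s : Finset ι} {g : ι → EuclideanSpace ℝ (Fin d) → ℝ}
    (h : ∀ i ∈ s, MemC1 K (g i)) : MemC1 K (∑ i ∈ s, g i) := by
  classical
  induction s using Finset.induction_on with
  | empty => simpa using MemC1.zero
  | insert _ _ hni ih =>
    rw [Finset.sum_insert hni]
    exact (h _ (Finset.mem_insert_self _ _)).add
      (ih fun i hi => h i (Finset.mem_insert_of_mem hi))


lemma MemC1.continuousOn (hf : MemC1 K f) : ContinuousOn f K := by
  obtain ⟨df, hdf, hder⟩ := hf
  intro x hx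
  have hsub : K ⊆ (K \ {x}) ∪ {x} := by
    intro y hy
    by_cases h : y = x
    · exact Or.inr (by simp [h])
    · exact Or.inl ⟨hy, by simp [h]⟩
  have hle : 𝓝[K] x ≤ 𝓝[(K \ {x}) ∪ {x}] x := nhdsWithin_mono x hsub
  rw [nhdsWithin_union] at hle
  have h1 : Tendsto f (𝓝[K \ {x}] x) (𝓝 (f x)) := by
    have hq := hder x hx
    have hn : Tendsto (fun y : EuclideanSpace ℝ (Fin d) => ‖y - x‖) (𝓝[K \ {x}] x) (𝓝 0) := by
      have hc : Continuous (fun y : EuclideanSpace ℝ (Fin d) => ‖y - x‖) :=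
        (continuous_id.sub continuous_const).norm
      have h : Tendsto (fun y : EuclideanSpace ℝ (Fin d) => ‖y - x‖) (𝓝 x) (𝓝 ‖x - x‖) :=
        hc.tendsto x
      simpa using h.mono_left nhdsWithin_le_nhds
    have hi : Tendsto (fun y : EuclideanSpace ℝ (Fin d) => (inner ℝ (df x) (y - x) : ℝ))
        (𝓝[K \ {x}] x) (𝓝 0) := by
      have hc : Continuous (fun y : EuclideanSpace ℝ (Fin d) => (inner ℝ (df x) (y - x) : ℝ)) :=
        continuous_const.inner (continuous_id.sub continuous_const)
      have h := hc.tendsto x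
      simp only [sub_self, inner_zero_right] at h
      exact h.mono_left nhdsWithin_le_nhds
    have hcomb := ((hq.mul hn).add (hi.add (tendsto_const_nhds (x := f x))))
    rw [mul_zero, zero_add, zero_add] at hcomb
    refine hcomb.congr' ?_
    filter_upwards [self_mem_nhdsWithin] with y hy
    have hyx : y ≠ x := hy.2
    have hne : ‖y - x‖ ≠ 0 := by
      simpa [sub_eq_zero] using hyx
    field_simp
    ring
  have h2 : Tendsto f (𝓝[({x} : Set (EuclideanSpace ℝ (Fin d)))] x) (𝓝 (f x)) := by
    rw [nhdsWithin_singleton]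
    exact tendsto_pure_nhds f x
  exact Tendsto.mono_left (by rw [tendsto_sup]; exact ⟨h1, h2⟩) hle

lemma exists_local_bound (hf : MemC1 K f) {x} (hx : x ∈ K) :
    ∃ M, 0 ≤ M ∧ ∃ δ > (0:ℝ), ∀ y ∈ K, y ≠ x → ‖y - x‖ < δ → |f y - f x| ≤ M * ‖y - x‖ := by
  obtain ⟨df, hdf, hder⟩ := hf
  have hq := hder x hx
  have hev := Metric.tendsto_nhds.mp hq 1 one_pos
  rw [Filter.eventually_iff, Metric.mem_nhdsWithin_iff] at hev
  obtain ⟨δ, hδ, hball⟩ := hev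
  refine ⟨‖df x‖ + 1, by positivity, δ, hδ, fun y hyK hyx hyd => ?_⟩
  have hymem : y ∈ Metric.ball x δ ∩ (K \ {x}) := by
    refine ⟨?_, hyK, by simp [hyx]⟩
    rw [Metric.mem_ball, dist_eq_norm]
    exact hyd
  have h1' : dist ((f y - f x - (inner ℝ (df x) (y - x) : ℝ)) / ‖y - x‖) 0 < 1 := hball hymem
  rw [Real.dist_eq, sub_zero] at h1'
  have h1 : |(f y - f x - (inner ℝ (df x) (y - x) : ℝ)) / ‖y - x‖| < 1 := h1'
  have hpos : (0:ℝ) < ‖y - x‖ := by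
    rw [norm_pos_iff, sub_ne_zero]
    exact hyx
  rw [abs_div, abs_of_pos hpos, div_lt_one hpos] at h1
  have h2 : |(inner ℝ (df x) (y - x) : ℝ)| ≤ ‖df x‖ * ‖y - x‖ := abs_real_inner_le_norm _ _
  have h3 : |f y - f x| ≤ |f y - f x - (inner ℝ (df x) (y - x) : ℝ)| + |(inner ℝ (df x) (y - x) : ℝ)| := by
    have := abs_add_le (f y - f x - (inner ℝ (df x) (y - x) : ℝ)) ((inner ℝ (df x) (y - x) : ℝ))
    simpa using this
  nlinarith

lemma sInf_derivSet_nonneg :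
    0 ≤ sInf {r | ∃ df, ContinuousOn df K ∧ IsDerivOn K f df ∧ r = supNormOn K df} := by
  apply Real.sInf_nonneg
  rintro r ⟨df, -, -, rfl⟩
  exact supNormOn_nonneg _

lemma supNormOn_le_c1Norm : supNormOn K f ≤ c1Norm K f :=
  le_add_of_nonneg_right sInf_derivSet_nonneg

lemma c1Norm_nonneg : 0 ≤ c1Norm K f :=
  le_trans (supNormOn_nonneg _) supNormOn_le_c1Norm

lemma abs_le_c1Norm (hK : IsCompact K) (hf : MemC1 K f) {z} (hz : z ∈ K) :
    |f z| ≤ c1Norm K f := by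
  have h := norm_le_supNormOn hK hf.continuousOn hz
  rw [Real.norm_eq_abs] at h
  exact h.trans supNormOn_le_c1Norm

lemma c1Norm_zero : c1Norm K (0 : EuclideanSpace ℝ (Fin d) → ℝ) ≤ 0 := by
  have h1 : supNormOn K (0 : EuclideanSpace ℝ (Fin d) → ℝ) ≤ 0 :=
    supNormOn_le le_rfl (fun z _ => by simp)
  have h2 : sInf {r | ∃ df, ContinuousOn df K ∧
      IsDerivOn K (0 : EuclideanSpace ℝ (Fin d) → ℝ) df ∧ r = supNormOn K df} ≤
      supNormOn K (0 : EuclideanSpace ℝ (Fin d) → EuclideanSpace ℝ (Fin d)) := by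
    apply csInf_le
    · exact ⟨0, by rintro r ⟨df, -, -, rfl⟩; exact supNormOn_nonneg _⟩
    · exact ⟨0, continuousOn_const, isDerivOn_zero, rfl⟩
  have h3 : supNormOn K (0 : EuclideanSpace ℝ (Fin d) → EuclideanSpace ℝ (Fin d)) ≤ 0 :=
    supNormOn_le le_rfl (fun z _ => by simp)
  unfold c1Norm
  linarith


lemma c1Norm_add_le (hK : IsCompact K) (hf : MemC1 K f) (hg : MemC1 K g) :
    c1Norm K (f + g) ≤ c1Norm K f + c1Norm K g := by
  apply le_of_forall_pos_le_add
  intro ε hε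
  obtain ⟨rf, ⟨df, hdf, hderf, rfl⟩, hrf⟩ :=
    Real.lt_sInf_add_pos (s := {r | ∃ df, ContinuousOn df K ∧ IsDerivOn K f df ∧
      r = supNormOn K df}) (by obtain ⟨df0, h1, h2⟩ := hf; exact ⟨_, df0, h1, h2, rfl⟩)
      (half_pos hε)
  obtain ⟨rg, ⟨dg, hdg, hderg, rfl⟩, hrg⟩ :=
    Real.lt_sInf_add_pos (s := {r | ∃ dg, ContinuousOn dg K ∧ IsDerivOn K g dg ∧
      r = supNormOn K dg}) (by obtain ⟨dg0, h1, h2⟩ := hg; exact ⟨_, dg0, h1, h2, rfl⟩)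
      (half_pos hε)
  have hsup : supNormOn K (f + g) ≤ supNormOn K f + supNormOn K g := by
    apply supNormOn_le (add_nonneg (supNormOn_nonneg _) (supNormOn_nonneg _))
    intro z hz
    calc ‖(f + g) z‖ ≤ ‖f z‖ + ‖g z‖ := by rw [Pi.add_apply]; exact norm_add_le _ _
    _ ≤ supNormOn K f + supNormOn K g :=
        add_le_add (norm_le_supNormOn hK hf.continuousOn hz)
          (norm_le_supNormOn hK hg.continuousOn hz)
  have hinf : sInf {r | ∃ dh, ContinuousOn dh K ∧ IsDerivOn K (f + g) dh ∧
      r = supNormOn K dh} ≤ supNormOn K (df + dg) := by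
    apply csInf_le
    · exact ⟨0, by rintro r ⟨dh, -, -, rfl⟩; exact supNormOn_nonneg _⟩
    · exact ⟨df + dg, hdf.add hdg, hderf.add hderg, rfl⟩
  have hsum : supNormOn K (df + dg) ≤ supNormOn K df + supNormOn K dg := by
    apply supNormOn_le (add_nonneg (supNormOn_nonneg _) (supNormOn_nonneg _))
    intro z hz
    calc ‖(df + dg) z‖ ≤ ‖df z‖ + ‖dg z‖ := by rw [Pi.add_apply]; exact norm_add_le _ _
    _ ≤ supNormOn K df + supNormOn K dg :=
        add_le_add (norm_le_supNormOn hK hdf hz) (norm_le_supNormOn hK hdg hz)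
  unfold c1Norm
  linarith

lemma c1Norm_const_mul_le (hK : IsCompact K) (hf : MemC1 K f) {t : ℝ} (ht : 0 < t) :
    c1Norm K (fun z => t * f z) ≤ t * c1Norm K f := by
  apply le_of_forall_pos_le_add
  intro ε hε
  obtain ⟨rf, ⟨df, hdf, hderf, rfl⟩, hrf⟩ :=
    Real.lt_sInf_add_pos (s := {r | ∃ df, ContinuousOn df K ∧ IsDerivOn K f df ∧
      r = supNormOn K df}) (by obtain ⟨df0, h1, h2⟩ := hf; exact ⟨_, df0, h1, h2, rfl⟩)
      (div_pos hε ht)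
  have hsup : supNormOn K (fun z => t * f z) ≤ t * supNormOn K f := by
    apply supNormOn_le (mul_nonneg ht.le (supNormOn_nonneg _))
    intro z hz
    rw [Real.norm_eq_abs, abs_mul, abs_of_pos ht]
    exact mul_le_mul_of_nonneg_left
      (by rw [← Real.norm_eq_abs]; exact norm_le_supNormOn hK hf.continuousOn hz) ht.le
  have hinf : sInf {r | ∃ dh, ContinuousOn dh K ∧
      IsDerivOn K (fun z => t * f z) dh ∧ r = supNormOn K dh} ≤
      supNormOn K (fun z => t • df z) := by
    apply csInf_le
    · exact ⟨0, by rintro r ⟨dh, -, -, rfl⟩; exact supNormOn_nonneg _⟩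
    · exact ⟨fun z => t • df z, hdf.const_smul t, hderf.const_mul t, rfl⟩
  have hsmul : supNormOn K (fun z => t • df z) ≤ t * supNormOn K df := by
    apply supNormOn_le (mul_nonneg ht.le (supNormOn_nonneg _))
    intro z hz
    rw [norm_smul, Real.norm_eq_abs, abs_of_pos ht]
    exact mul_le_mul_of_nonneg_left (norm_le_supNormOn hK hdf hz) ht.le
  unfold c1Norm
  have : t * (sInf {r | ∃ df, ContinuousOn df K ∧ IsDerivOn K f df ∧
      r = supNormOn K df} + ε / t) = t * sInf {r | ∃ df, ContinuousOn df K ∧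
      IsDerivOn K f df ∧ r = supNormOn K df} + ε := by
    field_simp
  nlinarith [hsup, hinf, hsmul, mul_le_mul_of_nonneg_left hrf.le ht.le]

lemma supNormOn_neg {α : Type*} [NormedAddCommGroup α] (g : EuclideanSpace ℝ (Fin d) → α) :
    supNormOn K (-g) = supNormOn K g := by
  unfold supNormOn
  congr 1
  ext r
  constructor
  · rintro ⟨z, hz, rfl⟩; exact ⟨z, hz, by simp⟩
  · rintro ⟨z, hz, rfl⟩; exact ⟨z, hz, by simp⟩

lemma c1Norm_neg : c1Norm K (-f) = c1Norm K f := by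
  unfold c1Norm
  rw [supNormOn_neg]
  congr 1
  have key : ∀ h : EuclideanSpace ℝ (Fin d) → ℝ,
      {r | ∃ dh, ContinuousOn dh K ∧ IsDerivOn K (-h) dh ∧ r = supNormOn K dh} ⊆
      {r | ∃ dh, ContinuousOn dh K ∧ IsDerivOn K h dh ∧ r = supNormOn K dh} := by
    rintro h r ⟨dh, h1, h2, rfl⟩
    refine ⟨-dh, h1.neg, ?_, (supNormOn_neg dh).symm⟩
    have := h2.neg
    rwa [neg_neg] at this
  congr 1
  apply Set.Subset.antisymm (key f)
  intro r hr
  apply key (-f)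
  rwa [neg_neg]

lemma c1Norm_sum_le (hK : IsCompact K) {ι : Type*} {s : Finset ι}
    {g : ι → EuclideanSpace ℝ (Fin d) → ℝ} (h : ∀ i ∈ s, MemC1 K (g i)) :
    c1Norm K (∑ i ∈ s, g i) ≤ ∑ i ∈ s, c1Norm K (g i) := by
  classical
  induction s using Finset.induction_on with
  | empty => simpa using c1Norm_zero
  | insert _ _ hni ih =>
    rename_i a s
    rw [Finset.sum_insert hni, Finset.sum_insert hni]
    calc c1Norm K (g a + ∑ i ∈ s, g i) ≤ c1Norm K (g a) + c1Norm K (∑ i ∈ s, g i) :=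
          c1Norm_add_le hK (h _ (Finset.mem_insert_self _ _))
            (MemC1.sum fun i hi => h i (Finset.mem_insert_of_mem hi))
    _ ≤ c1Norm K (g a) + ∑ i ∈ s, c1Norm K (g i) := by
        have := ih fun i hi => h i (Finset.mem_insert_of_mem hi)
        linarith

lemma geom_Ico_le (n m : ℕ) : ∑ k ∈ Finset.Ico n m, ((1:ℝ)/2)^k ≤ 2 * (1/2)^n := by
  rcases le_or_gt n m with h | h
  · have key : ∀ m, n ≤ m → ∑ k ∈ Finset.Ico n m, ((1:ℝ)/2)^k
        = 2 * (1/2)^n - 2 * (1/2)^m := by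
      intro m hm
      induction m, hm using Nat.le_induction with
      | base => simp
      | succ m hm ih =>
        rw [Finset.sum_Ico_succ_top hm, ih, pow_succ]
        ring
    rw [key m h]
    have : (0:ℝ) ≤ 2 * (1/2)^m := by positivity
    linarith
  · rw [Finset.Ico_eq_empty (by omega)]
    simp


end Aux

/-- Property of the chosen pair `(g, y)` at step `n`, given current sum `S` and radius `r`. -/
abbrev StepProp {d : ℕ} (K : Set (EuclideanSpace ℝ (Fin d))) (x : EuclideanSpace ℝ (Fin d))
    (S : EuclideanSpace ℝ (Fin d) → ℝ) (r : ℝ) (n : ℕ)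
    (p : (EuclideanSpace ℝ (Fin d) → ℝ) × EuclideanSpace ℝ (Fin d)) : Prop :=
  MemC1 K p.1 ∧ c1Norm K p.1 ≤ (1/2)^n * r ∧ p.2 ∈ K ∧ p.2 ≠ x ∧
    ‖p.2 - x‖ ≤ (1/2)^n ∧
    ((n:ℝ)+1) * ‖p.2 - x‖ ≤ |(S p.2 + p.1 p.2) - (S x + p.1 x)|

section Aux

variable {d : ℕ} {K : Set (EuclideanSpace ℝ (Fin d))}
  {f g : EuclideanSpace ℝ (Fin d) → ℝ}

lemma step_lemma (hK : IsCompact K) {x : EuclideanSpace ℝ (Fin d)} (hx : x ∈ K)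
    (Hfail : ∀ A > (0:ℝ), ∀ c > (0:ℝ), ∃ g, MemC1 K g ∧ c1Norm K g ≤ c ∧
      ∃ y ∈ K, y ≠ x ∧ A * ‖y - x‖ < |g y - g x|)
    {S : EuclideanSpace ℝ (Fin d) → ℝ} (hS : MemC1 K S) {r : ℝ} (hr : 0 < r)
    (hr1 : r ≤ 1) (n : ℕ) :
    ∃ p, StepProp K x S r n p := by
  obtain ⟨M, hM0, δ, hδ, hloc⟩ := exists_local_bound hS hx
  set c : ℝ := (1/2)^n * r with hc_def
  have hc : 0 < c := by positivity
  set A : ℝ := M + n + 3 + 2*c/δ with hA_def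
  have hA : 0 < A := by positivity
  obtain ⟨g, hg1, hg2, y, hyK, hyx, hgy⟩ := Hfail A hA c hc
  have hgy2 : |g y - g x| ≤ 2 * c := by
    have h1 : |g y - g x| ≤ |g y| + |g x| := abs_sub _ _
    have h2 : |g y| ≤ c1Norm K g := abs_le_c1Norm hK hg1 hyK
    have h3 : |g x| ≤ c1Norm K g := abs_le_c1Norm hK hg1 hx
    linarith
  have hnn : 0 ≤ ‖y - x‖ := norm_nonneg _
  have hnpos : 0 < ‖y - x‖ := by
    rw [norm_pos_iff, sub_ne_zero]; exact hyx
  have hylt : ‖y - x‖ < 2 * c / A := by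
    rw [lt_div_iff₀ hA]
    nlinarith
  have hA3 : 3 ≤ A := by
    have h0 : 0 ≤ 2*c/δ := by positivity
    have h1 : (0:ℝ) ≤ n := Nat.cast_nonneg n
    rw [hA_def]
    linarith
  have hcn : c ≤ (1/2)^n := by
    rw [hc_def]
    nlinarith [pow_pos (by norm_num : (0:ℝ) < 1/2) n]
  have hb1 : ‖y - x‖ ≤ (1/2)^n := by
    have h1 : 2*c/A ≤ 2*c/3 := by
      apply div_le_div_of_nonneg_left (by linarith) (by norm_num) hA3
    nlinarith
  have hb2 : ‖y - x‖ < δ := by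
    have h1 : 2*c/δ < A := by
      have h0 : (0:ℝ) ≤ n := Nat.cast_nonneg n
      rw [hA_def]
      linarith
    have h2 : 2*c < A * δ := by
      rw [div_lt_iff₀ hδ] at h1
      linarith
    have h3 : 2*c/A < δ := by
      rw [div_lt_iff₀ hA]
      linarith
    linarith
  have hSloc : |S y - S x| ≤ M * ‖y - x‖ := hloc y hyK hyx hb2
  refine ⟨(g, y), hg1, hg2, hyK, hyx, hb1, ?_⟩
  have htri : |g y - g x| ≤ |(S y + g y) - (S x + g x)| + |S y - S x| := by
    have := abs_add_le ((S y + g y) - (S x + g x)) (-(S y - S x))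
    have heq : (S y + g y) - (S x + g x) + -(S y - S x) = g y - g x := by ring
    rw [heq, abs_neg] at this
    exact this
  have hAineq : (M + (n:ℝ) + 3) * ‖y - x‖ ≤ A * ‖y - x‖ := by
    apply mul_le_mul_of_nonneg_right _ hnn
    have h0 : 0 ≤ 2*c/δ := by positivity
    rw [hA_def]
    linarith
  nlinarith


lemma exists_seq (hK : IsCompact K) {x : EuclideanSpace ℝ (Fin d)} (hx : x ∈ K)
    (Hfail : ∀ A > (0:ℝ), ∀ c > (0:ℝ), ∃ g, MemC1 K g ∧ c1Norm K g ≤ c ∧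
      ∃ y ∈ K, y ≠ x ∧ A * ‖y - x‖ < |g y - g x|) :
    ∃ (g : ℕ → EuclideanSpace ℝ (Fin d) → ℝ) (y : ℕ → EuclideanSpace ℝ (Fin d)),
      ∀ n, MemC1 K (g n) ∧ c1Norm K (g n) ≤ (1/2)^n ∧
        (∀ j, j < n → c1Norm K (g n) ≤ (1/2)^n * ‖y j - x‖) ∧
        y n ∈ K ∧ y n ≠ x ∧ ‖y n - x‖ ≤ (1/2)^n ∧
        ((n:ℝ)+1) * ‖y n - x‖ ≤
          |(∑ k ∈ Finset.range (n+1), g k) (y n) - (∑ k ∈ Finset.range (n+1), g k) x| := by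
  classical
  let pick : (EuclideanSpace ℝ (Fin d) → ℝ) → ℝ → ℕ →
      ((EuclideanSpace ℝ (Fin d) → ℝ) × EuclideanSpace ℝ (Fin d)) :=
    fun S r n => if h : ∃ p, StepProp K x S r n p then h.choose else (0, x)
  have pick_spec : ∀ S r n, (∃ p, StepProp K x S r n p) → StepProp K x S r n (pick S r n) := by
    intro S r n h
    simp only [pick, dif_pos h]
    exact h.choose_spec
  let st : ℕ → ((EuclideanSpace ℝ (Fin d) → ℝ) × ℝ) :=
    fun n => Nat.rec ((0 : EuclideanSpace ℝ (Fin d) → ℝ), (1:ℝ))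
      (fun n pr => (pr.1 + (pick pr.1 pr.2 n).1, min pr.2 ‖(pick pr.1 pr.2 n).2 - x‖)) n
  let g : ℕ → EuclideanSpace ℝ (Fin d) → ℝ := fun n => (pick (st n).1 (st n).2 n).1
  let y : ℕ → EuclideanSpace ℝ (Fin d) := fun n => (pick (st n).1 (st n).2 n).2
  have hst1 : ∀ n, (st (n+1)).1 = (st n).1 + g n := fun n => rfl
  have hst2 : ∀ n, (st (n+1)).2 = min (st n).2 ‖y n - x‖ := fun n => rfl
  have key : ∀ n, MemC1 K (st n).1 ∧ 0 < (st n).2 ∧ (st n).2 ≤ 1 ∧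
      StepProp K x (st n).1 (st n).2 n (pick (st n).1 (st n).2 n) := by
    intro n
    induction n with
    | zero =>
      have h0 : MemC1 K (st 0).1 := MemC1.zero
      have hr0 : (0:ℝ) < (st 0).2 := one_pos
      have hr1 : (st 0).2 ≤ 1 := le_refl 1
      exact ⟨h0, hr0, hr1, pick_spec _ _ _ (step_lemma hK hx Hfail h0 hr0 hr1 0)⟩
    | succ n ih =>
      obtain ⟨hS, hr, hr1, hP⟩ := ih
      have hgmem : MemC1 K (g n) := hP.1
      have hymem : y n ≠ x := hP.2.2.2.1
      have hS' : MemC1 K (st (n+1)).1 := by rw [hst1]; exact hS.add hgmem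
      have hr' : 0 < (st (n+1)).2 := by
        rw [hst2]
        exact lt_min hr (by rw [norm_pos_iff, sub_ne_zero]; exact hymem)
      have hr1' : (st (n+1)).2 ≤ 1 := by
        rw [hst2]; exact le_trans (min_le_left _ _) hr1
      exact ⟨hS', hr', hr1', pick_spec _ _ _ (step_lemma hK hx Hfail hS' hr' hr1' (n+1))⟩
  have hmono : ∀ n, (st (n+1)).2 ≤ (st n).2 := fun n => by
    rw [hst2]; exact min_le_left _ _
  have hanti : ∀ j n, j ≤ n → (st n).2 ≤ (st j).2 := by
    intro j n hjn
    induction n, hjn using Nat.le_induction with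
    | base => exact le_refl _
    | succ n hjn ih => exact le_trans (hmono n) ih
  have hry : ∀ j n, j < n → (st n).2 ≤ ‖y j - x‖ := by
    intro j n hjn
    have h1 : (st n).2 ≤ (st (j+1)).2 := hanti _ _ hjn
    have h2 : (st (j+1)).2 ≤ ‖y j - x‖ := by rw [hst2]; exact min_le_right _ _
    exact le_trans h1 h2
  have hSsum : ∀ n, (st n).1 = ∑ k ∈ Finset.range n, g k := by
    intro n
    induction n with
    | zero => rw [Finset.range_zero, Finset.sum_empty]; rfl
    | succ n ih => rw [hst1, ih, Finset.sum_range_succ]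
  refine ⟨g, y, fun n => ?_⟩
  obtain ⟨hS, hr, hr1, hP⟩ := key n
  obtain ⟨h1, h2, h3, h4, h5, h6⟩ := hP
  have hpow : (0:ℝ) ≤ (1/2)^n := by positivity
  refine ⟨h1, ?_, ?_, h3, h4, h5, ?_⟩
  · calc c1Norm K (g n) ≤ (1/2)^n * (st n).2 := h2
      _ ≤ (1/2)^n * 1 := mul_le_mul_of_nonneg_left hr1 hpow
      _ = (1/2)^n := mul_one _
  · intro j hj
    calc c1Norm K (g n) ≤ (1/2)^n * (st n).2 := h2
      _ ≤ (1/2)^n * ‖y j - x‖ := mul_le_mul_of_nonneg_left (hry j n hj) hpow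
  · have h6' : ((n:ℝ)+1) * ‖y n - x‖ ≤
        |((st n).1 (y n) + g n (y n)) - ((st n).1 x + g n x)| := h6
    rw [hSsum n] at h6'
    have e1 : (∑ k ∈ Finset.range (n+1), g k) (y n)
        = (∑ k ∈ Finset.range n, g k) (y n) + g n (y n) := by
      rw [Finset.sum_range_succ, Pi.add_apply]
    have e2 : (∑ k ∈ Finset.range (n+1), g k) x
        = (∑ k ∈ Finset.range n, g k) x + g n x := by
      rw [Finset.sum_range_succ, Pi.add_apply]
    rw [e1, e2]
    exact h6'

end Aux


/-- If `(C¹(K), ‖·‖_{C¹(K)})` is complete, then for every `x ∈ K` there is `C_x > 0`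
such that `|f y - f x| / ‖y - x‖ ≤ C_x ‖f‖_{C¹(K)}` for all `f ∈ C¹(K)` and `y ∈ K`,
`y ≠ x`. -/
theorem pointwise_bound_of_complete {d : ℕ}
    (K : Set (EuclideanSpace ℝ (Fin d))) (hK : IsCompact K)
    (hcompl : C1Complete K) :
    ∀ x ∈ K, ∃ C > (0:ℝ), ∀ f : EuclideanSpace ℝ (Fin d) → ℝ,
      MemC1 K f → ∀ y ∈ K, y ≠ x → |f y - f x| ≤ C * c1Norm K f * ‖y - x‖ := by
  intro x hx
  by_contra hcon
  push_neg at hcon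
  have Hfail : ∀ A > (0:ℝ), ∀ c > (0:ℝ), ∃ g, MemC1 K g ∧ c1Norm K g ≤ c ∧
      ∃ y ∈ K, y ≠ x ∧ A * ‖y - x‖ < |g y - g x| := by
    intro A hA c hc
    obtain ⟨f, hf, yy, hyK, hyne, hlt⟩ := hcon (A/c) (div_pos hA hc)
    have hcf : 0 < c1Norm K f := by
      rcases lt_or_eq_of_le (c1Norm_nonneg (f := f)) with h | h
      · exact h
      · exfalso
        have h1 : |f yy| ≤ c1Norm K f := abs_le_c1Norm hK hf hyK
        have h2 : |f x| ≤ c1Norm K f := abs_le_c1Norm hK hf hx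
        have h3 : |f yy - f x| ≤ |f yy| + |f x| := abs_sub _ _
        have h4 : A/c * c1Norm K f * ‖yy - x‖ = 0 := by rw [← h]; ring
        rw [h4] at hlt
        rw [← h] at h1 h2
        have h5 : 0 ≤ |f yy - f x| := abs_nonneg _
        linarith
    set t : ℝ := c / c1Norm K f with ht_def
    have ht : 0 < t := div_pos hc hcf
    refine ⟨fun z => t * f z, hf.const_mul t, ?_, yy, hyK, hyne, ?_⟩
    · calc c1Norm K (fun z => t * f z) ≤ t * c1Norm K f := c1Norm_const_mul_le hK hf ht
      _ = c := by rw [ht_def]; field_simp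
    · have h5 : |t * f yy - t * f x| = t * |f yy - f x| := by
        rw [← mul_sub, abs_mul, abs_of_pos ht]
      have h6 := mul_lt_mul_of_pos_left hlt ht
      have h7 : t * (A/c * c1Norm K f * ‖yy - x‖) = A * ‖yy - x‖ := by
        rw [ht_def]; field_simp
      rw [h5]; rw [h7] at h6; exact h6
  obtain ⟨g, y, hgy⟩ := exists_seq hK hx Hfail
  set S : ℕ → EuclideanSpace ℝ (Fin d) → ℝ := fun n => ∑ k ∈ Finset.range n, g k
    with hS_def
  have hSmem : ∀ n, MemC1 K (S n) := fun n => MemC1.sum (fun i _ => (hgy i).1)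
  have hSdiff : ∀ a b, a ≤ b → S b - S a = ∑ k ∈ Finset.Ico a b, g k := by
    intro a b hab
    rw [hS_def]
    exact (Finset.sum_Ico_eq_sub _ hab).symm
  have hbd : ∀ a b, a ≤ b → c1Norm K (S b - S a) ≤ 2 * (1/2)^a := by
    intro a b hab
    rw [hSdiff a b hab]
    calc c1Norm K (∑ k ∈ Finset.Ico a b, g k) ≤ ∑ k ∈ Finset.Ico a b, c1Norm K (g k) :=
        c1Norm_sum_le hK (fun i _ => (hgy i).1)
    _ ≤ ∑ k ∈ Finset.Ico a b, (1/2:ℝ)^k := Finset.sum_le_sum (fun i _ => (hgy i).2.1)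
    _ ≤ 2 * (1/2)^a := geom_Ico_le a b
  have hcauchy : C1Cauchy K S := by
    intro ε hε
    obtain ⟨N, hN⟩ : ∃ N : ℕ, (1/2:ℝ)^N < ε/2 :=
      exists_pow_lt_of_lt_one (half_pos hε) (by norm_num)
    refine ⟨N, fun m hm n hn => ?_⟩
    have hhalf : ∀ k, N ≤ k → (1/2:ℝ)^k ≤ (1/2:ℝ)^N := fun k hk =>
      pow_le_pow_of_le_one (by norm_num) (by norm_num) hk
    rcases le_total n m with h | h
    · calc c1Norm K (S m - S n) ≤ 2*(1/2)^n := hbd n m h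
      _ ≤ 2*(1/2)^N := by linarith [hhalf n hn]
      _ < ε := by linarith
    · have he : S m - S n = -(S n - S m) := by rw [neg_sub]
      rw [he, c1Norm_neg]
      calc c1Norm K (S n - S m) ≤ 2*(1/2)^m := hbd m n h
      _ ≤ 2*(1/2)^N := by linarith [hhalf m hm]
      _ < ε := by linarith
  obtain ⟨G, hG, hGconv⟩ := hcompl S hSmem hcauchy
  have hpt : ∀ z ∈ K, Tendsto (fun n => S n z) atTop (𝓝 (G z)) := by
    intro z hz
    rw [tendsto_iff_dist_tendsto_zero]
    apply squeeze_zero (fun n => dist_nonneg) _ hGconv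
    intro n
    show dist (S n z) (G z) ≤ c1Norm K (S n - G)
    rw [Real.dist_eq]
    have hmem : MemC1 K (S n - G) := (hSmem n).sub hG
    have h := abs_le_c1Norm hK hmem hz
    rwa [Pi.sub_apply] at h
  have htail : ∀ n, ∀ z ∈ K, |G z - S (n+1) z| ≤ (1/2)^n * ‖y n - x‖ := by
    intro n z hz
    have hm : ∀ m, n+1 ≤ m → |S m z - S (n+1) z| ≤ (1/2)^n * ‖y n - x‖ := by
      intro m hm
      have he : S m z - S (n+1) z = ∑ k ∈ Finset.Ico (n+1) m, g k z := by
        have h := hSdiff (n+1) m hm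
        calc S m z - S (n+1) z = (S m - S (n+1)) z := by rw [Pi.sub_apply]
        _ = (∑ k ∈ Finset.Ico (n+1) m, g k) z := by rw [h]
        _ = ∑ k ∈ Finset.Ico (n+1) m, g k z := by rw [Finset.sum_apply]
      rw [he]
      calc |∑ k ∈ Finset.Ico (n+1) m, g k z| ≤ ∑ k ∈ Finset.Ico (n+1) m, |g k z| :=
          Finset.abs_sum_le_sum_abs _ _
      _ ≤ ∑ k ∈ Finset.Ico (n+1) m, (1/2:ℝ)^k * ‖y n - x‖ := by
          apply Finset.sum_le_sum
          intro k hk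
          have hk' : n < k := by
            have := (Finset.mem_Ico.mp hk).1; omega
          have h1 : |g k z| ≤ c1Norm K (g k) := abs_le_c1Norm hK (hgy k).1 hz
          exact h1.trans ((hgy k).2.2.1 n hk')
      _ = (∑ k ∈ Finset.Ico (n+1) m, (1/2:ℝ)^k) * ‖y n - x‖ := by rw [Finset.sum_mul]
      _ ≤ (2 * (1/2)^(n+1)) * ‖y n - x‖ :=
          mul_le_mul_of_nonneg_right (geom_Ico_le _ _) (norm_nonneg _)
      _ = (1/2)^n * ‖y n - x‖ := by rw [pow_succ]; ring
    have hlim : Tendsto (fun m => |S m z - S (n+1) z|) atTop (𝓝 (|G z - S (n+1) z|)) := by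
      have h1 := ((hpt z hz).sub (tendsto_const_nhds (x := S (n+1) z))).abs
      have h2 : Tendsto (fun m => |S m z - S (n+1) z|) atTop (𝓝 (|G z - S (n+1) z|)) := h1
      exact h2
    apply le_of_tendsto hlim
    filter_upwards [eventually_ge_atTop (n+1)] with m hm'
    exact hm m hm'
  have hlow : ∀ n : ℕ, ((n:ℝ) - 1) * ‖y n - x‖ ≤ |G (y n) - G x| := by
    intro n
    obtain ⟨-, -, -, hyK, hyne, -, h7⟩ := hgy n
    have h7' : ((n:ℝ)+1) * ‖y n - x‖ ≤ |S (n+1) (y n) - S (n+1) x| := h7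
    have ht1 := htail n (y n) hyK
    have ht2 := htail n x hx
    have hSn : |S (n+1) (y n) - S (n+1) x| ≤
        |G (y n) - G x| + |G (y n) - S (n+1) (y n)| + |G x - S (n+1) x| := by
      have e : S (n+1) (y n) - S (n+1) x
          = (G (y n) - G x) + (-(G (y n) - S (n+1) (y n))) + (G x - S (n+1) x) := by ring
      calc |S (n+1) (y n) - S (n+1) x|
          = |(G (y n) - G x) + (-(G (y n) - S (n+1) (y n))) + (G x - S (n+1) x)| := by rw [e]
      _ ≤ |(G (y n) - G x) + (-(G (y n) - S (n+1) (y n)))| + |G x - S (n+1) x| := abs_add_le _ _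
      _ ≤ |G (y n) - G x| + |-(G (y n) - S (n+1) (y n))| + |G x - S (n+1) x| := by
          linarith [abs_add_le (G (y n) - G x) (-(G (y n) - S (n+1) (y n)))]
      _ = |G (y n) - G x| + |G (y n) - S (n+1) (y n)| + |G x - S (n+1) x| := by rw [abs_neg]
    have hp1 : (1/2:ℝ)^n ≤ 1 := pow_le_one₀ (by norm_num) (by norm_num)
    have hnn : 0 ≤ ‖y n - x‖ := norm_nonneg _
    have hmul : (1/2:ℝ)^n * ‖y n - x‖ ≤ 1 * ‖y n - x‖ :=
      mul_le_mul_of_nonneg_right hp1 hnn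
    have hsplit : ((n:ℝ)-1) * ‖y n - x‖ = ((n:ℝ)+1) * ‖y n - x‖ - 2 * ‖y n - x‖ := by ring
    linarith
  obtain ⟨M, hM0, δ, hδ, hloc⟩ := exists_local_bound hG hx
  obtain ⟨N₁, hN₁⟩ : ∃ N : ℕ, (1/2:ℝ)^N < δ := exists_pow_lt_of_lt_one hδ (by norm_num)
  set n := max N₁ (⌈M⌉₊ + 3) with hn_def
  obtain ⟨-, -, -, hyK, hyne, hyb, -⟩ := hgy n
  have hnδ : ‖y n - x‖ < δ := by
    have h1 : (1/2:ℝ)^n ≤ (1/2:ℝ)^N₁ :=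
      pow_le_pow_of_le_one (by norm_num) (by norm_num) (le_max_left _ _)
    linarith
  have hloc' := hloc (y n) hyK hyne hnδ
  have hlow' := hlow n
  have hpos : 0 < ‖y n - x‖ := by rw [norm_pos_iff, sub_ne_zero]; exact hyne
  have hM1 : ((n:ℝ) - 1) ≤ M := le_of_mul_le_mul_right (hlow'.trans hloc') hpos
  have hM2 : M + 2 ≤ (n:ℝ) := by
    have h1 : (⌈M⌉₊ + 3 : ℕ) ≤ n := le_max_right _ _
    have h2 : M ≤ (⌈M⌉₊ : ℝ) := Nat.le_ceil M
    have h3 : ((⌈M⌉₊ + 3 : ℕ) : ℝ) ≤ (n:ℝ) := by exact_mod_cast h1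
    push_cast at h3
    linarith
  linarith
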